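/- For w ∈ ℂ with w ≠ 0 and r₀ > 0, define S⁺_w = {−(r₀ e^{iφ} \bar{w})/|w| − λ\bar{w} : −π/2 ≤ φ ≤ π/2, 0 ≤ λ ≤ 1} and S⁻_w = {−(r₀ e^{iφ} \bar{w})/|w| − λ\bar{w} : π/2 ≤ φ ≤ 3π/2, 0 ≤ λ ≤ 1}. Then, up to sets of Lebesgue measure zero, S⁺_w \\ S⁻_w = B(−\bar{w}, r₀) \\ B(0, r₀) and S⁻_w \\ S⁺_w = B(0, r₀) \\ B(−\bar{w}, r₀). -/

import Mathlib

open MeasureTheory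


lemma slice_plus (r₀ a x y : ℝ) (hr : 0 < r₀) (ha : 0 < a)
    (h0 : x^2+y^2 ≠ r₀^2) (h1 : (x+a)^2+y^2 ≠ r₀^2) :
    ((y^2 ≤ r₀^2 ∧ -(Real.sqrt (r₀^2-y^2)) - a ≤ x ∧ x ≤ -(Real.sqrt (r₀^2-y^2))) ∧
      ¬(y^2 ≤ r₀^2 ∧ Real.sqrt (r₀^2-y^2) - a ≤ x ∧ x ≤ Real.sqrt (r₀^2-y^2)))
    ↔ ((x+a)^2+y^2 < r₀^2 ∧ ¬ (x^2+y^2 < r₀^2)) := by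
  set s := Real.sqrt (r₀^2-y^2) with hs_def
  have hs : 0 ≤ s := Real.sqrt_nonneg _
  constructor
  · rintro ⟨⟨hy, h2, h3⟩, h4⟩
    have hs2 : s^2 = r₀^2 - y^2 := Real.sq_sqrt (by linarith)
    push_neg at h4
    have hxa : x < s - a := by
      by_contra hcon
      push_neg at hcon
      have := h4 hy (by linarith)
      linarith
    have hle : (x+a)^2 ≤ s^2 := by nlinarith
    refine ⟨lt_of_le_of_ne (by nlinarith) h1, by nlinarith⟩
  · rintro ⟨hC1, hC0⟩
    push_neg at hC0
    have hy : y^2 ≤ r₀^2 := by nlinarith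
    have hs2 : s^2 = r₀^2 - y^2 := Real.sq_sqrt (by linarith)
    have h5 : -s < x + a := by nlinarith
    have h6 : x + a < s := by nlinarith
    have hgt : x^2 > s^2 := by
      rcases lt_or_gt_of_ne h0 with h | h
      · nlinarith
      · nlinarith
    have h7 : x < -s := by nlinarith
    exact ⟨⟨hy, by linarith, by linarith⟩, fun ⟨_, h8, _⟩ => by linarith⟩

lemma slice_minus (r₀ a x y : ℝ) (hr : 0 < r₀) (ha : 0 < a)
    (h0 : x^2+y^2 ≠ r₀^2) (h1 : (x+a)^2+y^2 ≠ r₀^2) :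
    ((y^2 ≤ r₀^2 ∧ Real.sqrt (r₀^2-y^2) - a ≤ x ∧ x ≤ Real.sqrt (r₀^2-y^2)) ∧
      ¬(y^2 ≤ r₀^2 ∧ -(Real.sqrt (r₀^2-y^2)) - a ≤ x ∧ x ≤ -(Real.sqrt (r₀^2-y^2))))
    ↔ (x^2+y^2 < r₀^2 ∧ ¬ ((x+a)^2+y^2 < r₀^2)) := by
  set s := Real.sqrt (r₀^2-y^2) with hs_def
  have hs : 0 ≤ s := Real.sqrt_nonneg _
  constructor
  · rintro ⟨⟨hy, h2, h3⟩, h4⟩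
    have hs2 : s^2 = r₀^2 - y^2 := Real.sq_sqrt (by linarith)
    push_neg at h4
    have hxg : -s < x := by
      by_contra hcon
      push_neg at hcon
      have := h4 hy (by linarith)
      linarith
    have hxl : x < s := by
      rcases lt_or_eq_of_le h3 with h | h
      · exact h
      · exfalso; apply h0; nlinarith
    refine ⟨by nlinarith, fun hcon => by nlinarith⟩
  · rintro ⟨hC0, hC1⟩
    push_neg at hC1
    have hy : y^2 ≤ r₀^2 := by nlinarith
    have hs2 : s^2 = r₀^2 - y^2 := Real.sq_sqrt (by linarith)
    have h5 : -s < x := by nlinarith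
    have h6 : x < s := by nlinarith
    have hgt : (x+a)^2 > s^2 := by
      rcases lt_or_gt_of_ne h1 with h | h
      · nlinarith
      · nlinarith
    have h7 : x + a > s := by nlinarith
    exact ⟨⟨hy, by linarith, by linarith⟩, fun ⟨_, _, h8⟩ => by linarith⟩


lemma char_plus (r₀ a x y : ℝ) (hr : 0 < r₀) (ha : 0 < a) :
    (∃ φ ∈ Set.Icc (-(Real.pi/2)) (Real.pi/2), ∃ l ∈ Set.Icc (0:ℝ) 1,
      x = -(r₀ * Real.cos φ) - l*a ∧ y = -(r₀ * Real.sin φ))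
    ↔ (y^2 ≤ r₀^2 ∧ -(Real.sqrt (r₀^2-y^2)) - a ≤ x ∧ x ≤ -(Real.sqrt (r₀^2-y^2))) := by
  constructor
  · rintro ⟨φ, hφ, l, hl, hx, hy⟩
    have hcos : 0 ≤ Real.cos φ := Real.cos_nonneg_of_mem_Icc hφ
    have hsq : r₀^2 - y^2 = (r₀ * Real.cos φ)^2 := by
      have := Real.sin_sq_add_cos_sq φ
      rw [hy]; nlinarith
    have hsqrt : Real.sqrt (r₀^2-y^2) = r₀ * Real.cos φ := by
      rw [hsq, Real.sqrt_sq (by positivity)]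
    refine ⟨by nlinarith, ?_, ?_⟩ <;> rw [hsqrt] <;> rcases hl with ⟨hl0, hl1⟩ <;> nlinarith
  · rintro ⟨hy, h2, h3⟩
    set s := Real.sqrt (r₀^2-y^2) with hs_def
    have hs2 : s^2 = r₀^2 - y^2 := Real.sq_sqrt (by linarith)
    have hyle : y ≤ r₀ := by nlinarith
    have hyge : -r₀ ≤ y := by nlinarith
    have hm1 : (-1:ℝ) ≤ -(y/r₀) := by rw [neg_le, neg_neg]; exact (div_le_one hr).mpr hyle
    have hm2 : -(y/r₀) ≤ 1 := by
      rw [neg_le]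
      exact (le_div_iff₀ hr).mpr (by linarith)
    have hm2' : y/r₀ ≤ 1 := (div_le_one hr).mpr hyle
    refine ⟨Real.arcsin (-(y/r₀)), Real.arcsin_mem_Icc _, (-s - x)/a, ?_, ?_, ?_⟩
    · constructor
      · apply div_nonneg _ ha.le; linarith
      · rw [div_le_one ha]; linarith
    · have hcs : r₀ * Real.cos (Real.arcsin (-(y/r₀))) = s := by
        rw [Real.cos_arcsin]
        calc r₀ * Real.sqrt (1 - (-(y/r₀))^2)
            = Real.sqrt (r₀^2 * (1 - (-(y/r₀))^2)) := by
              rw [Real.sqrt_mul (by positivity), Real.sqrt_sq hr.le]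
          _ = s := by rw [hs_def]; congr 1; field_simp
      rw [hcs]; field_simp; ring
    · rw [Real.sin_arcsin hm1 hm2]; field_simp

lemma char_minus (r₀ a x y : ℝ) (hr : 0 < r₀) (ha : 0 < a) :
    (∃ φ ∈ Set.Icc (Real.pi/2) (3*Real.pi/2), ∃ l ∈ Set.Icc (0:ℝ) 1,
      x = -(r₀ * Real.cos φ) - l*a ∧ y = -(r₀ * Real.sin φ))
    ↔ (y^2 ≤ r₀^2 ∧ Real.sqrt (r₀^2-y^2) - a ≤ x ∧ x ≤ Real.sqrt (r₀^2-y^2)) := by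
  constructor
  · rintro ⟨φ, hφ, l, hl, hx, hy⟩
    have hcos : Real.cos φ ≤ 0 :=
      Real.cos_nonpos_of_pi_div_two_le_of_le hφ.1 (by linarith [hφ.2])
    have hsq : r₀^2 - y^2 = (-(r₀ * Real.cos φ))^2 := by
      have := Real.sin_sq_add_cos_sq φ
      rw [hy]; nlinarith
    have hsqrt : Real.sqrt (r₀^2-y^2) = -(r₀ * Real.cos φ) := by
      rw [hsq, Real.sqrt_sq (by nlinarith)]
    refine ⟨by nlinarith, ?_, ?_⟩ <;> rw [hsqrt] <;> rcases hl with ⟨hl0, hl1⟩ <;> nlinarith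
  · rintro ⟨hy, h2, h3⟩
    set s := Real.sqrt (r₀^2-y^2) with hs_def
    have hs2 : s^2 = r₀^2 - y^2 := Real.sq_sqrt (by linarith)
    have hyle : y ≤ r₀ := by nlinarith
    have hm1 : (-1:ℝ) ≤ -(y/r₀) := by rw [neg_le, neg_neg]; exact (div_le_one hr).mpr hyle
    have hm2 : -(y/r₀) ≤ 1 := by
      rw [neg_le]
      exact (le_div_iff₀ hr).mpr (by nlinarith)
    have harc := Real.arcsin_mem_Icc (-(y/r₀))
    refine ⟨Real.pi - Real.arcsin (-(y/r₀)), ⟨by linarith [harc.2], by linarith [harc.1]⟩,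
      (s - x)/a, ?_, ?_, ?_⟩
    · constructor
      · apply div_nonneg _ ha.le; linarith
      · rw [div_le_one ha]; linarith
    · have hcs : r₀ * Real.cos (Real.arcsin (-(y/r₀))) = s := by
        rw [Real.cos_arcsin]
        calc r₀ * Real.sqrt (1 - (-(y/r₀))^2)
            = Real.sqrt (r₀^2 * (1 - (-(y/r₀))^2)) := by
              rw [Real.sqrt_mul (by positivity), Real.sqrt_sq hr.le]
          _ = s := by rw [hs_def]; congr 1; field_simp
      rw [Real.cos_pi_sub, mul_neg, hcs]; field_simp; ring
    · rw [Real.sin_pi_sub, Real.sin_arcsin hm1 hm2]; field_simp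


/-- Parametrization of the symmetric difference of the two disks `B(−w̄, r₀)` and `B(0, r₀)`
by the sets `S⁺_w`, `S⁻_w`: up to Lebesgue-null sets, `S⁺_w \ S⁻_w = B(−w̄, r₀) \ B(0, r₀)`
and `S⁻_w \ S⁺_w = B(0, r₀) \ B(−w̄, r₀)`. -/
theorem stmt_13 (w : ℂ) (hw : w ≠ 0) (r₀ : ℝ) (hr₀ : 0 < r₀) :
    (volume (symmDiff
        (({z : ℂ | ∃ φ ∈ Set.Icc (-(Real.pi / 2)) (Real.pi / 2), ∃ lam ∈ Set.Icc (0 : ℝ) 1,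
            z = -((r₀ : ℂ) * Complex.exp ((φ : ℂ) * Complex.I) * (starRingEnd ℂ) w)
                  / (‖w‖ : ℂ) - (lam : ℂ) * (starRingEnd ℂ) w}) \
         ({z : ℂ | ∃ φ ∈ Set.Icc (Real.pi / 2) (3 * Real.pi / 2), ∃ lam ∈ Set.Icc (0 : ℝ) 1,
            z = -((r₀ : ℂ) * Complex.exp ((φ : ℂ) * Complex.I) * (starRingEnd ℂ) w)
                  / (‖w‖ : ℂ) - (lam : ℂ) * (starRingEnd ℂ) w}))
        (Metric.ball (-(starRingEnd ℂ) w) r₀ \ Metric.ball 0 r₀)) = 0) ∧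
    (volume (symmDiff
        (({z : ℂ | ∃ φ ∈ Set.Icc (Real.pi / 2) (3 * Real.pi / 2), ∃ lam ∈ Set.Icc (0 : ℝ) 1,
            z = -((r₀ : ℂ) * Complex.exp ((φ : ℂ) * Complex.I) * (starRingEnd ℂ) w)
                  / (‖w‖ : ℂ) - (lam : ℂ) * (starRingEnd ℂ) w}) \
         ({z : ℂ | ∃ φ ∈ Set.Icc (-(Real.pi / 2)) (Real.pi / 2), ∃ lam ∈ Set.Icc (0 : ℝ) 1,
            z = -((r₀ : ℂ) * Complex.exp ((φ : ℂ) * Complex.I) * (starRingEnd ℂ) w)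
                  / (‖w‖ : ℂ) - (lam : ℂ) * (starRingEnd ℂ) w}))
        (Metric.ball 0 r₀ \ Metric.ball (-(starRingEnd ℂ) w) r₀)) = 0) := by

  have ha : 0 < ‖w‖ := norm_pos_iff.mpr hw
  have haC : ((‖w‖ : ℝ) : ℂ) ≠ 0 := Complex.ofReal_ne_zero.mpr ha.ne'
  have hwc : (starRingEnd ℂ) w * w = ((‖w‖ : ℝ) : ℂ)^2 := by
    rw [mul_comm, Complex.mul_conj]
    push_cast [Complex.normSq_eq_norm_sq]
    ring
  have hwa : w / ((‖w‖ : ℝ) : ℂ) ≠ 0 := div_ne_zero hw haC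
  set a := ‖w‖ with ha_def
  set c := (starRingEnd ℂ) w with hc_def
  -- the rotated coordinate
  set ζ : ℂ → ℂ := fun z => z * w / ((a : ℝ) : ℂ) with hζ_def
  have hstep : ∀ (z : ℂ) (φ lam : ℝ),
      (z = -((r₀:ℂ) * Complex.exp ((φ:ℂ)*Complex.I) * c)/((a:ℝ):ℂ) - (lam:ℂ)*c
        ↔ ((ζ z).re = -(r₀ * Real.cos φ) - lam*a ∧ (ζ z).im = -(r₀ * Real.sin φ))) := by
    intro z φ lam
    have hE : (-((r₀:ℂ) * Complex.exp ((φ:ℂ)*Complex.I) * c)/((a:ℝ):ℂ) - (lam:ℂ)*c)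
          * (w / ((a:ℝ):ℂ))
        = -((r₀:ℂ) * Complex.exp ((φ:ℂ)*Complex.I)) - (lam:ℂ)*((a:ℝ):ℂ) := by
      rw [← mul_div_assoc]
      field_simp
      linear_combination (-(r₀:ℂ) * Complex.exp ((φ:ℂ)*Complex.I) - (lam:ℂ)*((a:ℝ):ℂ)) * hwc
    calc z = -((r₀:ℂ) * Complex.exp ((φ:ℂ)*Complex.I) * c)/((a:ℝ):ℂ) - (lam:ℂ)*c
        ↔ z * (w / ((a:ℝ):ℂ))
          = (-((r₀:ℂ) * Complex.exp ((φ:ℂ)*Complex.I) * c)/((a:ℝ):ℂ) - (lam:ℂ)*c)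
            * (w / ((a:ℝ):ℂ)) := (mul_left_inj' hwa).symm
      _ ↔ ζ z = -((r₀:ℂ) * Complex.exp ((φ:ℂ)*Complex.I)) - (lam:ℂ)*((a:ℝ):ℂ) := by
            have hzz : ζ z = z * (w / ((a:ℝ):ℂ)) := mul_div_assoc z w _
            rw [hE, ← hzz]
      _ ↔ _ := by
            rw [Complex.ext_iff]
            constructor <;> rintro ⟨h1, h2⟩ <;> constructor <;>
              simp only [Complex.sub_re, Complex.sub_im, Complex.neg_re, Complex.neg_im,
                Complex.mul_re, Complex.mul_im, Complex.ofReal_re, Complex.ofReal_im,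
                Complex.exp_ofReal_mul_I_re, Complex.exp_ofReal_mul_I_im] at h1 h2 ⊢ <;>
              linarith
  have habs : ∀ z : ℂ, ‖ζ z‖ = ‖z‖ := by
    intro z
    rw [hζ_def]
    simp only [norm_div, norm_mul, Complex.norm_real, Real.norm_eq_abs, abs_of_pos ha]
    field_simp
    rw [ha_def]
  have habs2 : ∀ z : ℂ, ‖ζ z + ((a:ℝ):ℂ)‖ = ‖z + c‖ := by
    intro z
    have h : ζ z + ((a:ℝ):ℂ) = (z + c) * (w / ((a:ℝ):ℂ)) := by
      rw [hζ_def]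
      field_simp
      linear_combination -hwc
    rw [h, norm_mul, norm_div, Complex.norm_real, Real.norm_eq_abs, abs_of_pos ha]
    field_simp
    rw [ha_def]
  have hsq : ∀ u : ℂ, ‖u‖^2 = u.re^2 + u.im^2 := by
    intro u
    rw [Complex.sq_norm, Complex.normSq_apply]
    ring
  -- membership characterizations
  have hball0 : ∀ z : ℂ, z ∈ Metric.ball (0:ℂ) r₀ ↔ (ζ z).re^2 + (ζ z).im^2 < r₀^2 := by
    intro z
    rw [Metric.mem_ball, dist_zero_right, ← habs z, ← hsq]
    constructor <;> intro h <;> nlinarith [norm_nonneg (ζ z)]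
  have hball1 : ∀ z : ℂ, z ∈ Metric.ball (-c) r₀ ↔ ((ζ z).re + a)^2 + (ζ z).im^2 < r₀^2 := by
    intro z
    rw [Metric.mem_ball, dist_eq_norm, sub_neg_eq_add, ← habs2 z]
    have : ‖ζ z + ((a:ℝ):ℂ)‖^2 = ((ζ z).re + a)^2 + (ζ z).im^2 := by
      rw [hsq]; simp
    constructor <;> intro h <;> nlinarith [norm_nonneg (ζ z + ((a:ℝ):ℂ))]
  have hsph0 : ∀ z : ℂ, z ∉ Metric.sphere (0:ℂ) r₀ → (ζ z).re^2 + (ζ z).im^2 ≠ r₀^2 := by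
    intro z hz hcon
    apply hz
    rw [Metric.mem_sphere, dist_zero_right, ← habs z]
    nlinarith [norm_nonneg (ζ z), hsq (ζ z)]
  have hsph1 : ∀ z : ℂ, z ∉ Metric.sphere (-c) r₀ → ((ζ z).re + a)^2 + (ζ z).im^2 ≠ r₀^2 := by
    intro z hz hcon
    apply hz
    rw [Metric.mem_sphere, dist_eq_norm, sub_neg_eq_add, ← habs2 z]
    have h2 : ‖ζ z + ((a:ℝ):ℂ)‖^2 = ((ζ z).re + a)^2 + (ζ z).im^2 := by
      rw [hsq]; simp
    nlinarith [norm_nonneg (ζ z + ((a:ℝ):ℂ))]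
  have hmemP : ∀ z : ℂ,
      ((∃ φ ∈ Set.Icc (-(Real.pi / 2)) (Real.pi / 2), ∃ lam ∈ Set.Icc (0 : ℝ) 1,
          z = -((r₀ : ℂ) * Complex.exp ((φ : ℂ) * Complex.I) * c) / ((a:ℝ):ℂ) - (lam : ℂ) * c)
        ↔ ((ζ z).im^2 ≤ r₀^2 ∧ -(Real.sqrt (r₀^2-(ζ z).im^2)) - a ≤ (ζ z).re ∧
            (ζ z).re ≤ -(Real.sqrt (r₀^2-(ζ z).im^2)))) := by
    intro z
    rw [← char_plus r₀ a ((ζ z).re) ((ζ z).im) hr₀ ha]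
    constructor
    · rintro ⟨φ, hφ, lam, hlam, heq⟩
      exact ⟨φ, hφ, lam, hlam, (hstep z φ lam).mp heq⟩
    · rintro ⟨φ, hφ, lam, hlam, heq⟩
      exact ⟨φ, hφ, lam, hlam, (hstep z φ lam).mpr heq⟩
  have hmemM : ∀ z : ℂ,
      ((∃ φ ∈ Set.Icc (Real.pi / 2) (3 * Real.pi / 2), ∃ lam ∈ Set.Icc (0 : ℝ) 1,
          z = -((r₀ : ℂ) * Complex.exp ((φ : ℂ) * Complex.I) * c) / ((a:ℝ):ℂ) - (lam : ℂ) * c)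
        ↔ ((ζ z).im^2 ≤ r₀^2 ∧ Real.sqrt (r₀^2-(ζ z).im^2) - a ≤ (ζ z).re ∧
            (ζ z).re ≤ Real.sqrt (r₀^2-(ζ z).im^2))) := by
    intro z
    rw [← char_minus r₀ a ((ζ z).re) ((ζ z).im) hr₀ ha]
    constructor
    · rintro ⟨φ, hφ, lam, hlam, heq⟩
      exact ⟨φ, hφ, lam, hlam, (hstep z φ lam).mp heq⟩
    · rintro ⟨φ, hφ, lam, hlam, heq⟩
      exact ⟨φ, hφ, lam, hlam, (hstep z φ lam).mpr heq⟩
  have hN : volume (Metric.sphere (0:ℂ) r₀ ∪ Metric.sphere (-c) r₀) = 0 :=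
    measure_union_null (MeasureTheory.Measure.addHaar_sphere volume _ _)
      (MeasureTheory.Measure.addHaar_sphere volume _ _)
  constructor
  · refine measure_mono_null ?_ hN
    intro z hz
    by_contra hzc
    simp only [Set.mem_union, not_or] at hzc
    obtain ⟨hz0, hz1⟩ := hzc
    have h0 := hsph0 z hz0
    have h1 := hsph1 z hz1
    have hiff : z ∈ ({z : ℂ | ∃ φ ∈ Set.Icc (-(Real.pi / 2)) (Real.pi / 2),
          ∃ lam ∈ Set.Icc (0 : ℝ) 1,
          z = -((r₀ : ℂ) * Complex.exp ((φ : ℂ) * Complex.I) * c) / ((a:ℝ):ℂ) - (lam : ℂ) * c} \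
        {z : ℂ | ∃ φ ∈ Set.Icc (Real.pi / 2) (3 * Real.pi / 2), ∃ lam ∈ Set.Icc (0 : ℝ) 1,
          z = -((r₀ : ℂ) * Complex.exp ((φ : ℂ) * Complex.I) * c) / ((a:ℝ):ℂ) - (lam : ℂ) * c})
        ↔ z ∈ Metric.ball (-c) r₀ \ Metric.ball 0 r₀ := by
      simp only [Set.mem_diff, Set.mem_setOf_eq, hmemP z, hmemM z, hball0 z, hball1 z]
      exact slice_plus r₀ a ((ζ z).re) ((ζ z).im) hr₀ ha h0 h1
    rw [Set.mem_symmDiff] at hz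
    rcases hz with ⟨hA, hB⟩ | ⟨hB, hA⟩
    · exact hB (hiff.mp hA)
    · exact hA (hiff.mpr hB)
  · refine measure_mono_null ?_ hN
    intro z hz
    by_contra hzc
    simp only [Set.mem_union, not_or] at hzc
    obtain ⟨hz0, hz1⟩ := hzc
    have h0 := hsph0 z hz0
    have h1 := hsph1 z hz1
    have hiff : z ∈ ({z : ℂ | ∃ φ ∈ Set.Icc (Real.pi / 2) (3 * Real.pi / 2),
          ∃ lam ∈ Set.Icc (0 : ℝ) 1,
          z = -((r₀ : ℂ) * Complex.exp ((φ : ℂ) * Complex.I) * c) / ((a:ℝ):ℂ) - (lam : ℂ) * c} \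
        {z : ℂ | ∃ φ ∈ Set.Icc (-(Real.pi / 2)) (Real.pi / 2), ∃ lam ∈ Set.Icc (0 : ℝ) 1,
          z = -((r₀ : ℂ) * Complex.exp ((φ : ℂ) * Complex.I) * c) / ((a:ℝ):ℂ) - (lam : ℂ) * c})
        ↔ z ∈ Metric.ball (0:ℂ) r₀ \ Metric.ball (-c) r₀ := by
      simp only [Set.mem_diff, Set.mem_setOf_eq, hmemP z, hmemM z, hball0 z, hball1 z]
      exact slice_minus r₀ a ((ζ z).re) ((ζ z).im) hr₀ ha h0 h1
    rw [Set.mem_symmDiff] at hz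
    rcases hz with ⟨hA, hB⟩ | ⟨hB, hA⟩
    · exact hB (hiff.mp hA)
    · exact hA (hiff.mpr hB)
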